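/- Every element h of the group H_{a,b} = ⟨[e_a,1],[1,e_b],[1,j],[j,1]⟩ ≤ SO(4) (a, b odd, coprime) can be written in the form h = [e_a,1]^{k₁}[1,e_b]^{k₂}[1,j]^{l₁}[j,1]^{l₂} with k₁ ∈ ℤ/aℤ, k₂ ∈ ℤ/bℤ, l₁ ∈ ℤ/4ℤ, l₂ ∈ ℤ/2ℤ. -/

import Mathlib

open Quaternion Real

noncomputable section
open scoped Classical

/-- The linear map `x ↦ l · x · r̄` on `ℍ ≅ ℝ⁴`. -/
def qRot (l r : ℍ[ℝ]) : ℍ[ℝ] →ₗ[ℝ] ℍ[ℝ] where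
  toFun x := l * x * star r
  map_add' x y := by simp [mul_add, add_mul]
  map_smul' c x := by simp [mul_smul_comm, smul_mul_assoc]

/-- The rotation `[l,r] : x ↦ l · x · r̄` as an invertible linear map of `ℝ⁴ ≅ ℍ`
(for `l, r ≠ 0`; junk value `1` otherwise). -/
def qRotUnit (l r : ℍ[ℝ]) : (ℍ[ℝ] →ₗ[ℝ] ℍ[ℝ])ˣ :=
  if h : l ≠ 0 ∧ r ≠ 0 then
    { val := qRot l r
      inv := qRot l⁻¹ r⁻¹
      val_inv := by
        apply LinearMap.ext; intro x
        show l * (l⁻¹ * x * star r⁻¹) * star r = x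
        have h1 : star (r⁻¹ : ℍ[ℝ]) * star r = 1 := by
          rw [← star_mul, mul_inv_cancel₀ h.2, star_one]
        have h2 : l * l⁻¹ = 1 := mul_inv_cancel₀ h.1
        calc l * (l⁻¹ * x * star r⁻¹) * star r
            = (l * l⁻¹) * x * (star r⁻¹ * star r) := by noncomm_ring
          _ = x := by rw [h1, h2, one_mul, mul_one]
      inv_val := by
        apply LinearMap.ext; intro x
        show l⁻¹ * (l * x * star r) * star r⁻¹ = x
        have h1 : star r * star (r⁻¹ : ℍ[ℝ]) = 1 := by
          rw [← star_mul, inv_mul_cancel₀ h.2, star_one]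
        have h2 : l⁻¹ * l = 1 := inv_mul_cancel₀ h.1
        calc l⁻¹ * (l * x * star r) * star r⁻¹
            = (l⁻¹ * l) * x * (star r * star r⁻¹) := by noncomm_ring
          _ = x := by rw [h1, h2, one_mul, mul_one] }
  else 1

/-- The unit quaternion `e_p = cos(π/p) + sin(π/p)·i`. -/
def eQ (p : ℕ) : ℍ[ℝ] := ⟨Real.cos (π / p), Real.sin (π / p), 0, 0⟩

/-- The quaternion unit `j`. -/
def jQ : ℍ[ℝ] := ⟨0, 0, 1, 0⟩

/-- The group `H_{a,b} = ⟨[e_a,1], [1,e_b], [1,j], [j,1]⟩`. -/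
def Hgrp (a b : ℕ) : Subgroup (ℍ[ℝ] →ₗ[ℝ] ℍ[ℝ])ˣ :=
  Subgroup.closure {qRotUnit (eQ a) 1, qRotUnit 1 (eQ b), qRotUnit 1 jQ, qRotUnit jQ 1}

/-! ### Auxiliary lemmas -/

section Aux

lemma qRotUnit_val {l r : ℍ[ℝ]} (hl : l ≠ 0) (hr : r ≠ 0) :
    ((qRotUnit l r : (ℍ[ℝ] →ₗ[ℝ] ℍ[ℝ])ˣ) : ℍ[ℝ] →ₗ[ℝ] ℍ[ℝ]) = qRot l r := by
  rw [qRotUnit, dif_pos ⟨hl, hr⟩]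

lemma qRotUnit_mul {l r l' r' : ℍ[ℝ]} (hl : l ≠ 0) (hr : r ≠ 0) (hl' : l' ≠ 0) (hr' : r' ≠ 0) :
    qRotUnit l r * qRotUnit l' r' = qRotUnit (l * l') (r * r') := by
  apply Units.ext
  rw [Units.val_mul, qRotUnit_val hl hr, qRotUnit_val hl' hr',
    qRotUnit_val (mul_ne_zero hl hl') (mul_ne_zero hr hr')]
  apply LinearMap.ext; intro x
  show l * (l' * x * star r') * star r = (l * l') * x * star (r * r')
  rw [star_mul]; noncomm_ring

lemma qRotUnit_one : qRotUnit 1 1 = 1 := by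
  apply Units.ext
  rw [qRotUnit_val one_ne_zero one_ne_zero, Units.val_one]
  apply LinearMap.ext; intro x
  show (1 : ℍ[ℝ]) * x * star (1 : ℍ[ℝ]) = x
  simp

lemma qRotUnit_inv {l r : ℍ[ℝ]} (hl : l ≠ 0) (hr : r ≠ 0) :
    (qRotUnit l r)⁻¹ = qRotUnit l⁻¹ r⁻¹ := by
  rw [qRotUnit, qRotUnit, dif_pos ⟨hl, hr⟩, dif_pos ⟨inv_ne_zero hl, inv_ne_zero hr⟩]
  exact Units.ext rfl

lemma qRotUnit_neg_one : qRotUnit (-1) 1 = qRotUnit 1 (-1) := by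
  apply Units.ext
  rw [qRotUnit_val (neg_ne_zero.mpr one_ne_zero) one_ne_zero,
    qRotUnit_val one_ne_zero (neg_ne_zero.mpr one_ne_zero)]
  apply LinearMap.ext; intro x
  show (-1 : ℍ[ℝ]) * x * star (1 : ℍ[ℝ]) = (1 : ℍ[ℝ]) * x * star (-1 : ℍ[ℝ])
  simp

lemma qRotUnit_pow_left {l : ℍ[ℝ]} (hl : l ≠ 0) (n : ℕ) :
    (qRotUnit l 1) ^ n = qRotUnit (l ^ n) 1 := by
  induction n with
  | zero => rw [pow_zero, pow_zero, qRotUnit_one]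
  | succ n ih =>
    rw [pow_succ, ih, qRotUnit_mul (pow_ne_zero n hl) one_ne_zero hl one_ne_zero,
      ← pow_succ, mul_one]

lemma qRotUnit_pow_right {r : ℍ[ℝ]} (hr : r ≠ 0) (n : ℕ) :
    (qRotUnit 1 r) ^ n = qRotUnit 1 (r ^ n) := by
  induction n with
  | zero => rw [pow_zero, pow_zero, qRotUnit_one]
  | succ n ih =>
    rw [pow_succ, ih, qRotUnit_mul one_ne_zero (pow_ne_zero n hr) one_ne_zero hr,
      ← pow_succ, mul_one]

lemma eQ_ne_zero (p : ℕ) : eQ p ≠ 0 := by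
  intro h
  rw [Quaternion.ext_iff] at h
  simp only [eQ, Quaternion.re_zero, Quaternion.imI_zero] at h
  nlinarith [Real.sin_sq_add_cos_sq (π / p), h.1, h.2.1]

lemma jQ_ne_zero : jQ ≠ 0 := by
  intro h
  rw [Quaternion.ext_iff] at h
  simp [jQ] at h

lemma jQ_mul_jQ : jQ * jQ = -1 := by
  rw [Quaternion.ext_iff]
  simp only [Quaternion.re_mul, Quaternion.imI_mul, Quaternion.imJ_mul, Quaternion.imK_mul]
  simp [jQ]

lemma eQ_mul_star (p : ℕ) : eQ p * star (eQ p) = 1 := by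
  rw [Quaternion.ext_iff]
  simp only [Quaternion.re_mul, Quaternion.imI_mul, Quaternion.imJ_mul, Quaternion.imK_mul,
    Quaternion.re_star, Quaternion.imI_star, Quaternion.imJ_star, Quaternion.imK_star,
    Quaternion.re_one, Quaternion.imI_one, Quaternion.imJ_one, Quaternion.imK_one]
  simp only [eQ]
  refine ⟨by nlinarith [Real.sin_sq_add_cos_sq (π / p)], by ring, by ring, by ring⟩

lemma eQ_inv (p : ℕ) : (eQ p)⁻¹ = star (eQ p) :=
  inv_eq_of_mul_eq_one_right (eQ_mul_star p)

lemma jQ_mul_eQ (p : ℕ) : jQ * eQ p = (eQ p)⁻¹ * jQ := by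
  rw [eQ_inv, Quaternion.ext_iff]
  simp only [Quaternion.re_mul, Quaternion.imI_mul, Quaternion.imJ_mul, Quaternion.imK_mul,
    Quaternion.re_star, Quaternion.imI_star, Quaternion.imJ_star, Quaternion.imK_star]
  simp [jQ, eQ]

lemma eQ_pow (p n : ℕ) : (eQ p) ^ n = ⟨Real.cos (n * (π / p)), Real.sin (n * (π / p)), 0, 0⟩ := by
  induction n with
  | zero =>
    rw [pow_zero]; refine Quaternion.ext_iff.mpr ?_
    norm_num
  | succ n ih =>
    rw [pow_succ]; refine Quaternion.ext_iff.mpr ?_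
    push_cast
    simp only [Quaternion.re_mul, Quaternion.imI_mul, Quaternion.imJ_mul, Quaternion.imK_mul]
    simp only [ih]
    simp only [eQ, add_mul, one_mul, Real.cos_add, Real.sin_add]
    norm_num
    ring

lemma eQ_pow_self {p : ℕ} (hp : 0 < p) : (eQ p) ^ p = -1 := by
  rw [eQ_pow]
  have h : (p : ℝ) * (π / p) = π := by
    field_simp
  rw [h]; refine Quaternion.ext_iff.mpr ?_
  simp

/-- Abstract normal form lemma for a group generated by `A, B, J, K` satisfying the
commutation relations of `H_{a,b}`. -/
theorem normal_form_abstract {G : Type*} [Group G] (A B J K : G) (a b : ℕ)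
    (ha : 0 < a) (hb : 0 < b)
    (hAB : Commute A B) (hAJ : Commute A J) (hBK : Commute B K) (hJK : Commute J K)
    (hKA : K * A = A⁻¹ * K) (hJB : J * B = B⁻¹ * J)
    (hAa : A ^ a = J ^ 2) (hBb : B ^ b = J ^ 2) (hK2 : K ^ 2 = J ^ 2) (hJ4 : J ^ 4 = 1) :
    ∀ h ∈ Subgroup.closure {A, B, J, K},
      ∃ k₁ k₂ l₁ l₂ : ℕ, k₁ < a ∧ k₂ < b ∧ l₁ < 4 ∧ l₂ < 2 ∧
        h = A ^ k₁ * B ^ k₂ * J ^ l₁ * K ^ l₂ := by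
  -- order relations
  have hA2a : A ^ (a * 2) = 1 := by
    rw [pow_mul, hAa, ← pow_mul, hJ4]
  have hB2b : B ^ (b * 2) = 1 := by
    rw [pow_mul, hBb, ← pow_mul, hJ4]
  have hK4 : K ^ 4 = 1 := by
    rw [show (4 : ℕ) = 2 * 2 from rfl, pow_mul, hK2, ← pow_mul, hJ4]
  have hAinv : A⁻¹ = A ^ (a * 2 - 1) := by
    refine inv_eq_of_mul_eq_one_right ?_
    rw [← pow_succ', Nat.sub_add_cancel (by omega)]
    exact hA2a
  have hBinv : B⁻¹ = B ^ (b * 2 - 1) := by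
    refine inv_eq_of_mul_eq_one_right ?_
    rw [← pow_succ', Nat.sub_add_cancel (by omega)]
    exact hB2b
  have hJinv : J⁻¹ = J ^ 3 := by
    refine inv_eq_of_mul_eq_one_right ?_
    rw [← pow_succ']
    exact hJ4
  have hKinv : K⁻¹ = K ^ 3 := by
    refine inv_eq_of_mul_eq_one_right ?_
    rw [← pow_succ']
    exact hK4
  -- `Z := J ^ 2` commutes with everything
  have cZA : Commute (J ^ 2) A := hAJ.symm.pow_left 2
  have cZB : Commute (J ^ 2) B := hBb ▸ (Commute.refl B).pow_left b
  have cZJ : Commute (J ^ 2) J := (Commute.refl J).pow_left 2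
  have cZK : Commute (J ^ 2) K := hJK.pow_left 2
  -- semiconjugation of powers
  have hKAp : ∀ k : ℕ, K * A ^ k = A ^ ((a * 2 - 1) * k) * K := by
    intro k
    have h1 : SemiconjBy K A A⁻¹ := hKA
    rw [(h1.pow_right k).eq, hAinv, ← pow_mul]
  have hJBp : ∀ k : ℕ, J * B ^ k = B ^ ((b * 2 - 1) * k) * J := by
    intro k
    have h1 : SemiconjBy J B B⁻¹ := hJB
    rw [(h1.pow_right k).eq, hBinv, ← pow_mul]
  have jmod : ∀ n : ℕ, J ^ n = J ^ (n % 4) := by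
    intro n
    conv_lhs => rw [← Nat.mod_add_div n 4]
    rw [pow_add, pow_mul, hJ4, one_pow, mul_one]
  -- reduction lemma
  have R : ∀ k₁ k₂ l₁ l₂ : ℕ,
      ∃ m₁ m₂ n₁ n₂ : ℕ, m₁ < a ∧ m₂ < b ∧ n₁ < 4 ∧ n₂ < 2 ∧
        A ^ k₁ * B ^ k₂ * J ^ l₁ * K ^ l₂ = A ^ m₁ * B ^ m₂ * J ^ n₁ * K ^ n₂ := by
    intro k₁ k₂ l₁ l₂
    refine ⟨k₁ % a, k₂ % b, (l₁ + 2 * (k₁ / a + k₂ / b + l₂ / 2)) % 4, l₂ % 2,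
      Nat.mod_lt _ ha, Nat.mod_lt _ hb, Nat.mod_lt _ (by norm_num),
      Nat.mod_lt _ (by norm_num), ?_⟩
    have eA : A ^ k₁ = A ^ (k₁ % a) * (J ^ 2) ^ (k₁ / a) := by
      conv_lhs => rw [← Nat.mod_add_div k₁ a]
      rw [pow_add, pow_mul, hAa]
    have eB : B ^ k₂ = B ^ (k₂ % b) * (J ^ 2) ^ (k₂ / b) := by
      conv_lhs => rw [← Nat.mod_add_div k₂ b]
      rw [pow_add, pow_mul, hBb]
    have eK : K ^ l₂ = K ^ (l₂ % 2) * (J ^ 2) ^ (l₂ / 2) := by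
      conv_lhs => rw [← Nat.mod_add_div l₂ 2]
      rw [pow_add, pow_mul, hK2]
    rw [eA, eB, eK]
    set r₁ := k₁ % a
    set r₂ := k₂ % b
    set r₃ := l₂ % 2
    set q₁ := k₁ / a
    set q₂ := k₂ / b
    set q₃ := l₂ / 2
    calc (A ^ r₁ * (J ^ 2) ^ q₁) * (B ^ r₂ * (J ^ 2) ^ q₂) * J ^ l₁ * (K ^ r₃ * (J ^ 2) ^ q₃)
        = A ^ r₁ * ((J ^ 2) ^ q₁ * B ^ r₂) * (J ^ 2) ^ q₂ * J ^ l₁ * K ^ r₃ * (J ^ 2) ^ q₃ := by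
          simp only [mul_assoc]
      _ = A ^ r₁ * (B ^ r₂ * (J ^ 2) ^ q₁) * (J ^ 2) ^ q₂ * J ^ l₁ * K ^ r₃ * (J ^ 2) ^ q₃ := by
          rw [((cZB.pow_right r₂).pow_left q₁).eq]
      _ = A ^ r₁ * B ^ r₂ * ((J ^ 2) ^ q₁ * ((J ^ 2) ^ q₂ * J ^ l₁)) * (K ^ r₃ * (J ^ 2) ^ q₃) := by
          simp only [mul_assoc]
      _ = A ^ r₁ * B ^ r₂ * ((J ^ 2) ^ q₁ * ((J ^ 2) ^ q₂ * J ^ l₁)) * ((J ^ 2) ^ q₃ * K ^ r₃) := by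
          rw [((cZK.pow_right r₃).pow_left q₃).eq]
      _ = A ^ r₁ * B ^ r₂ * ((J ^ 2) ^ q₁ * (J ^ 2) ^ q₂ * J ^ l₁ * (J ^ 2) ^ q₃) * K ^ r₃ := by
          simp only [mul_assoc]
      _ = A ^ r₁ * B ^ r₂ * J ^ (2 * q₁ + 2 * q₂ + l₁ + 2 * q₃) * K ^ r₃ := by
          rw [← pow_mul, ← pow_mul, ← pow_mul, ← pow_add, ← pow_add, ← pow_add]
      _ = A ^ r₁ * B ^ r₂ * J ^ ((l₁ + 2 * (q₁ + q₂ + q₃)) % 4) * K ^ r₃ := by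
          rw [← jmod (l₁ + 2 * (q₁ + q₂ + q₃)),
            show 2 * q₁ + 2 * q₂ + l₁ + 2 * q₃ = l₁ + 2 * (q₁ + q₂ + q₃) by ring]
  -- single-generator multiplication lemmas
  have mulA : ∀ k₁ k₂ l₁ l₂ : ℕ, A * (A ^ k₁ * B ^ k₂ * J ^ l₁ * K ^ l₂)
      = A ^ (k₁ + 1) * B ^ k₂ * J ^ l₁ * K ^ l₂ := by
    intro k₁ k₂ l₁ l₂
    simp only [← mul_assoc, ← pow_succ']
  have mulB : ∀ k₁ k₂ l₁ l₂ : ℕ, B * (A ^ k₁ * B ^ k₂ * J ^ l₁ * K ^ l₂)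
      = A ^ k₁ * B ^ (k₂ + 1) * J ^ l₁ * K ^ l₂ := by
    intro k₁ k₂ l₁ l₂
    calc B * (A ^ k₁ * B ^ k₂ * J ^ l₁ * K ^ l₂)
        = (B * A ^ k₁) * (B ^ k₂ * (J ^ l₁ * K ^ l₂)) := by simp only [mul_assoc]
      _ = (A ^ k₁ * B) * (B ^ k₂ * (J ^ l₁ * K ^ l₂)) := by rw [(hAB.symm.pow_right k₁).eq]
      _ = A ^ k₁ * (B * B ^ k₂) * (J ^ l₁ * K ^ l₂) := by simp only [mul_assoc]
      _ = A ^ k₁ * B ^ (k₂ + 1) * (J ^ l₁ * K ^ l₂) := by rw [← pow_succ']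
      _ = A ^ k₁ * B ^ (k₂ + 1) * J ^ l₁ * K ^ l₂ := by simp only [mul_assoc]
  have mulJ : ∀ k₁ k₂ l₁ l₂ : ℕ, J * (A ^ k₁ * B ^ k₂ * J ^ l₁ * K ^ l₂)
      = A ^ k₁ * B ^ ((b * 2 - 1) * k₂) * J ^ (l₁ + 1) * K ^ l₂ := by
    intro k₁ k₂ l₁ l₂
    calc J * (A ^ k₁ * B ^ k₂ * J ^ l₁ * K ^ l₂)
        = (J * A ^ k₁) * (B ^ k₂ * (J ^ l₁ * K ^ l₂)) := by simp only [mul_assoc]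
      _ = (A ^ k₁ * J) * (B ^ k₂ * (J ^ l₁ * K ^ l₂)) := by rw [(hAJ.symm.pow_right k₁).eq]
      _ = A ^ k₁ * ((J * B ^ k₂) * (J ^ l₁ * K ^ l₂)) := by simp only [mul_assoc]
      _ = A ^ k₁ * ((B ^ ((b * 2 - 1) * k₂) * J) * (J ^ l₁ * K ^ l₂)) := by rw [hJBp]
      _ = A ^ k₁ * B ^ ((b * 2 - 1) * k₂) * (J * J ^ l₁) * K ^ l₂ := by simp only [mul_assoc]
      _ = A ^ k₁ * B ^ ((b * 2 - 1) * k₂) * J ^ (l₁ + 1) * K ^ l₂ := by rw [← pow_succ']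
  have mulK : ∀ k₁ k₂ l₁ l₂ : ℕ, K * (A ^ k₁ * B ^ k₂ * J ^ l₁ * K ^ l₂)
      = A ^ ((a * 2 - 1) * k₁) * B ^ k₂ * J ^ l₁ * K ^ (l₂ + 1) := by
    intro k₁ k₂ l₁ l₂
    calc K * (A ^ k₁ * B ^ k₂ * J ^ l₁ * K ^ l₂)
        = (K * A ^ k₁) * (B ^ k₂ * (J ^ l₁ * K ^ l₂)) := by simp only [mul_assoc]
      _ = (A ^ ((a * 2 - 1) * k₁) * K) * (B ^ k₂ * (J ^ l₁ * K ^ l₂)) := by rw [hKAp]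
      _ = A ^ ((a * 2 - 1) * k₁) * ((K * B ^ k₂) * (J ^ l₁ * K ^ l₂)) := by
          simp only [mul_assoc]
      _ = A ^ ((a * 2 - 1) * k₁) * ((B ^ k₂ * K) * (J ^ l₁ * K ^ l₂)) := by
          rw [(hBK.symm.pow_right k₂).eq]
      _ = A ^ ((a * 2 - 1) * k₁) * B ^ k₂ * ((K * J ^ l₁) * K ^ l₂) := by simp only [mul_assoc]
      _ = A ^ ((a * 2 - 1) * k₁) * B ^ k₂ * ((J ^ l₁ * K) * K ^ l₂) := by
          rw [(hJK.symm.pow_right l₁).eq]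
      _ = A ^ ((a * 2 - 1) * k₁) * B ^ k₂ * J ^ l₁ * (K * K ^ l₂) := by simp only [mul_assoc]
      _ = A ^ ((a * 2 - 1) * k₁) * B ^ k₂ * J ^ l₁ * K ^ (l₂ + 1) := by rw [← pow_succ']
  -- step lemmas
  have stepP : ∀ g : G, g = A ∨ g = B ∨ g = J ∨ g = K → ∀ x : G,
      (∃ k₁ k₂ l₁ l₂ : ℕ, k₁ < a ∧ k₂ < b ∧ l₁ < 4 ∧ l₂ < 2 ∧
        x = A ^ k₁ * B ^ k₂ * J ^ l₁ * K ^ l₂) →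
      (∃ k₁ k₂ l₁ l₂ : ℕ, k₁ < a ∧ k₂ < b ∧ l₁ < 4 ∧ l₂ < 2 ∧
        g * x = A ^ k₁ * B ^ k₂ * J ^ l₁ * K ^ l₂) := by
    rintro g hg x ⟨k₁, k₂, l₁, l₂, h1, h2, h3, h4, rfl⟩
    obtain rfl | rfl | rfl | rfl := hg
    · rw [mulA k₁ k₂ l₁ l₂]; exact R _ _ _ _
    · rw [mulB k₁ k₂ l₁ l₂]; exact R _ _ _ _
    · rw [mulJ k₁ k₂ l₁ l₂]; exact R _ _ _ _
    · rw [mulK k₁ k₂ l₁ l₂]; exact R _ _ _ _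
  have stepPow : ∀ g : G, g = A ∨ g = B ∨ g = J ∨ g = K → ∀ (n : ℕ) (x : G),
      (∃ k₁ k₂ l₁ l₂ : ℕ, k₁ < a ∧ k₂ < b ∧ l₁ < 4 ∧ l₂ < 2 ∧
        x = A ^ k₁ * B ^ k₂ * J ^ l₁ * K ^ l₂) →
      (∃ k₁ k₂ l₁ l₂ : ℕ, k₁ < a ∧ k₂ < b ∧ l₁ < 4 ∧ l₂ < 2 ∧
        g ^ n * x = A ^ k₁ * B ^ k₂ * J ^ l₁ * K ^ l₂) := by
    intro g hg n
    induction n with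
    | zero => intro x hx; simpa using hx
    | succ n ih =>
      intro x hx
      have h1 := stepP g hg _ (ih x hx)
      rwa [← mul_assoc, ← pow_succ'] at h1
  have stepInv : ∀ g : G, g = A ∨ g = B ∨ g = J ∨ g = K → ∀ x : G,
      (∃ k₁ k₂ l₁ l₂ : ℕ, k₁ < a ∧ k₂ < b ∧ l₁ < 4 ∧ l₂ < 2 ∧
        x = A ^ k₁ * B ^ k₂ * J ^ l₁ * K ^ l₂) →
      (∃ k₁ k₂ l₁ l₂ : ℕ, k₁ < a ∧ k₂ < b ∧ l₁ < 4 ∧ l₂ < 2 ∧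
        g⁻¹ * x = A ^ k₁ * B ^ k₂ * J ^ l₁ * K ^ l₂) := by
    rintro g hg x hx
    obtain rfl | rfl | rfl | rfl := hg
    · rw [hAinv]; exact stepPow _ (Or.inl rfl) _ x hx
    · rw [hBinv]; exact stepPow _ (Or.inr (Or.inl rfl)) _ x hx
    · rw [hJinv]; exact stepPow _ (Or.inr (Or.inr (Or.inl rfl))) _ x hx
    · rw [hKinv]; exact stepPow _ (Or.inr (Or.inr (Or.inr rfl))) _ x hx
  -- main induction
  intro h hmem
  induction hmem using Subgroup.closure_induction_left with
  | one => exact ⟨0, 0, 0, 0, ha, hb, by norm_num, by norm_num, by simp⟩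
  | mul_left x hx y hy ih =>
    have hx' : x = A ∨ x = B ∨ x = J ∨ x = K := by
      simpa [Set.mem_insert_iff] using hx
    exact stepP x hx' y ih
  | inv_mul_cancel x hx y hy ih =>
    have hx' : x = A ∨ x = B ∨ x = J ∨ x = K := by
      simpa [Set.mem_insert_iff] using hx
    exact stepInv x hx' y ih

end Aux

/-- Every element of `H_{a,b}` (`a, b` odd and coprime) can be written in the normal form
`[e_a,1]^{k₁}[1,e_b]^{k₂}[1,j]^{l₁}[j,1]^{l₂}` with `k₁ ∈ ℤ/aℤ`, `k₂ ∈ ℤ/bℤ`,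
`l₁ ∈ ℤ/4ℤ`, `l₂ ∈ ℤ/2ℤ`. -/
theorem Hgrp_normal_form (a b : ℕ) (ha : Odd a) (hb : Odd b) (hab : Nat.Coprime a b) :
    ∀ h ∈ Hgrp a b, ∃ k₁ k₂ l₁ l₂ : ℕ, k₁ < a ∧ k₂ < b ∧ l₁ < 4 ∧ l₂ < 2 ∧
      h = (qRotUnit (eQ a) 1) ^ k₁ * (qRotUnit 1 (eQ b)) ^ k₂ *
            (qRotUnit 1 jQ) ^ l₁ * (qRotUnit jQ 1) ^ l₂ := by
  have ha0 : 0 < a := ha.pos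
  have hb0 : 0 < b := hb.pos
  have hea := eQ_ne_zero a
  have heb := eQ_ne_zero b
  have hj := jQ_ne_zero
  have h1 : (1 : ℍ[ℝ]) ≠ 0 := one_ne_zero
  have jsq : jQ ^ 2 = -1 := by rw [sq, jQ_mul_jQ]
  have hAB : Commute (qRotUnit (eQ a) 1) (qRotUnit 1 (eQ b)) := by
    show _ * _ = _ * _
    rw [qRotUnit_mul hea h1 h1 heb, qRotUnit_mul h1 heb hea h1]
    simp only [one_mul, mul_one]
  have hAJ : Commute (qRotUnit (eQ a) 1) (qRotUnit 1 jQ) := by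
    show _ * _ = _ * _
    rw [qRotUnit_mul hea h1 h1 hj, qRotUnit_mul h1 hj hea h1]
    simp only [one_mul, mul_one]
  have hBK : Commute (qRotUnit 1 (eQ b)) (qRotUnit jQ 1) := by
    show _ * _ = _ * _
    rw [qRotUnit_mul h1 heb hj h1, qRotUnit_mul hj h1 h1 heb]
    simp only [one_mul, mul_one]
  have hJK : Commute (qRotUnit 1 jQ) (qRotUnit jQ 1) := by
    show _ * _ = _ * _
    rw [qRotUnit_mul h1 hj hj h1, qRotUnit_mul hj h1 h1 hj]
    simp only [one_mul, mul_one]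
  have hKA : qRotUnit jQ 1 * qRotUnit (eQ a) 1
      = (qRotUnit (eQ a) 1)⁻¹ * qRotUnit jQ 1 := by
    rw [qRotUnit_inv hea h1, inv_one, qRotUnit_mul hj h1 hea h1,
      qRotUnit_mul (inv_ne_zero hea) h1 hj h1, one_mul, jQ_mul_eQ]
  have hJB : qRotUnit 1 jQ * qRotUnit 1 (eQ b)
      = (qRotUnit 1 (eQ b))⁻¹ * qRotUnit 1 jQ := by
    rw [qRotUnit_inv h1 heb, inv_one, qRotUnit_mul h1 hj h1 heb,
      qRotUnit_mul h1 (inv_ne_zero heb) h1 hj, one_mul, jQ_mul_eQ]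
  have hAa : (qRotUnit (eQ a) 1) ^ a = (qRotUnit 1 jQ) ^ 2 := by
    rw [qRotUnit_pow_left hea a, eQ_pow_self ha0, qRotUnit_pow_right hj 2, jsq,
      qRotUnit_neg_one]
  have hBb : (qRotUnit 1 (eQ b)) ^ b = (qRotUnit 1 jQ) ^ 2 := by
    rw [qRotUnit_pow_right heb b, eQ_pow_self hb0, qRotUnit_pow_right hj 2, jsq]
  have hK2 : (qRotUnit jQ 1) ^ 2 = (qRotUnit 1 jQ) ^ 2 := by
    rw [qRotUnit_pow_left hj 2, jsq, qRotUnit_pow_right hj 2, jsq, qRotUnit_neg_one]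
  have hJ4 : (qRotUnit 1 jQ) ^ 4 = 1 := by
    have hj4 : jQ ^ 4 = 1 := by
      rw [show (4 : ℕ) = 2 * 2 from rfl, pow_mul, jsq, neg_one_sq]
    rw [qRotUnit_pow_right hj 4, hj4, qRotUnit_one]
  exact normal_form_abstract _ _ _ _ a b ha0 hb0 hAB hAJ hBK hJK hKA hJB hAa hBb hK2 hJ4

end
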